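/- arXiv:1208.1822 — 2 statements merged into one kernel-verified Lean document; each statement's English description precedes it below -/
import Mathlib

section
/- For positive integers x and k the following three conditions are equivalent: (a) x ≤ ξ_k, where ξ_k = Σ_{j=1}^k C(2j−1, j); (b) ∂_{k−1}(x) ≥ x; (c) x^{MG(k)} ≥ 2x. -/
noncomputable section

open MvPolynomial

/-- The total degree of an exponent vector. -/
def edeg {n : ℕ} (a : Fin n →₀ ℕ) : ℕ := ∑ i, a i

/-- An exponent vector is squarefree if every exponent is at most 1. -/
def IsSqfree {n : ℕ} (a : Fin n →₀ ℕ) : Prop := ∀ i, a i ≤ 1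

/-- The set of exponent vectors of monomials belonging to the ideal `I`. -/
def expSet {K : Type} [Field K] {n : ℕ} (I : Ideal (MvPolynomial (Fin n) K)) :
    Set (Fin n →₀ ℕ) := {a | (monomial a (1 : K)) ∈ I}

/-- `I` is generated by monomials `x^a` with `a` satisfying the predicate `P`. -/
def GenBy {K : Type} [Field K] {n : ℕ} (I : Ideal (MvPolynomial (Fin n) K))
    (P : (Fin n →₀ ℕ) → Prop) : Prop :=
  ∃ G : Set (Fin n →₀ ℕ), (∀ a ∈ G, P a) ∧
    I = Ideal.span ((fun a => (monomial a (1 : K))) '' G)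

/-- `I` is a monomial ideal. -/
def IsMonomialIdeal {K : Type} [Field K] {n : ℕ} (I : Ideal (MvPolynomial (Fin n) K)) : Prop :=
  GenBy I fun _ => True

/-- `I` is a squarefree monomial ideal. -/
def IsSqfreeMonomialIdeal {K : Type} [Field K] {n : ℕ}
    (I : Ideal (MvPolynomial (Fin n) K)) : Prop := GenBy I IsSqfree

/-- `x^a >_lex x^b` in the lexicographic order with `x_1 > x_2 > ⋯ > x_n`. -/
def lexGT {n : ℕ} (a b : Fin n →₀ ℕ) : Prop :=
  ∃ i : Fin n, (∀ j : Fin n, j < i → a j = b j) ∧ b i < a i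

/-- `I` is a lexsegment ideal. -/
def IsLexsegment {K : Type} [Field K] {n : ℕ} (I : Ideal (MvPolynomial (Fin n) K)) : Prop :=
  IsMonomialIdeal I ∧ ∀ a b : Fin n →₀ ℕ, (monomial a (1 : K)) ∈ I → edeg b = edeg a →
    lexGT b a → (monomial b (1 : K)) ∈ I

/-- `I` is a squarefree lexsegment ideal. -/
def IsSqfreeLexsegment {K : Type} [Field K] {n : ℕ}
    (I : Ideal (MvPolynomial (Fin n) K)) : Prop :=
  IsSqfreeMonomialIdeal I ∧ ∀ a b : Fin n →₀ ℕ, IsSqfree a → IsSqfree b →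
    (monomial a (1 : K)) ∈ I → edeg b = edeg a → lexGT b a → (monomial b (1 : K)) ∈ I

/-- The minimal number of generators of an ideal. -/
def mu {K : Type} [Field K] {n : ℕ} (I : Ideal (MvPolynomial (Fin n) K)) : ℕ :=
  sInf {m | ∃ G : Finset (MvPolynomial (Fin n) K), G.card = m ∧ I = Ideal.span (G : Set _)}

/-- `ξ_k = ∑_{j=1}^k C(2j-1, j)`. -/
def xi (k : ℕ) : ℕ := ∑ j ∈ Finset.Icc 1 k, (2 * j - 1).choose j

/-- The Hilbert function of `I`: the `K`-dimension of the degree-`j` component of `I`. -/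
def hilb {K : Type} [Field K] {n : ℕ} (I : Ideal (MvPolynomial (Fin n) K)) (j : ℕ) : ℕ :=
  Module.finrank K ↥((Submodule.restrictScalars K I) ⊓ homogeneousSubmodule (Fin n) K j)

/-- The Hilbert function of `I` extended to all integer degrees. -/
def hilbZ {K : Type} [Field K] {n : ℕ} (I : Ideal (MvPolynomial (Fin n) K)) (j : ℤ) : ℕ :=
  if 0 ≤ j then hilb I j.toNat else 0

/-- The Hilbert function of a standard graded polynomial ring in `d` variables,
at degree `t ∈ ℤ`. -/
def polyHilb (d : ℕ) (t : ℤ) : ℕ :=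
  if t < 0 then 0 else if d = 0 then (if t = 0 then 1 else 0) else (t.toNat + (d - 1)).choose (d - 1)

/-- A (standard graded) Hilbert decomposition of `I` all of whose retracts are polynomial
rings in at least `k` variables: `I ≅ ⊕ᵢ Sᵢ(-sᵢ)` as graded `K`-vector spaces, where `Sᵢ`
is a graded algebra retract of `S`, i.e. a polynomial ring in `dd i ≥ k` variables. -/
def HilbertDecomp1 {K : Type} [Field K] {n : ℕ} (I : Ideal (MvPolynomial (Fin n) K))
    (k : ℕ) : Prop :=
  ∃ (ι : Type) (_ : Fintype ι) (dd : ι → ℕ) (s : ι → ℤ),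
    (∀ i, k ≤ dd i) ∧ ∀ j : ℤ, hilbZ I j = ∑ i, polyHilb (dd i) (j - s i)

/-- The Hilbert depth of `I` in the standard graded sense. -/
def hdepth1 {K : Type} [Field K] {n : ℕ} (I : Ideal (MvPolynomial (Fin n) K)) : ℕ∞ :=
  sSup {k : ℕ∞ | ∃ m : ℕ, HilbertDecomp1 I m ∧ k = m}

/-- The set of exponent vectors `u + ℕ^Z`, corresponding to the Stanley space `x^u K[Z]`. -/
def cone {n : ℕ} (u : Fin n →₀ ℕ) (Z : Finset (Fin n)) : Set (Fin n →₀ ℕ) :=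
  {a | (∀ j, u j ≤ a j) ∧ ∀ j ∉ Z, a j = u j}

/-- A Stanley decomposition, with all Stanley spaces of dimension at least `k`, of the
`ℤⁿ`-graded module whose monomial basis has exponent set `A`. -/
def StanleyPartN {n : ℕ} (A : Set (Fin n →₀ ℕ)) (k : ℕ) : Prop :=
  ∃ (ι : Type) (_ : Fintype ι) (u : ι → (Fin n →₀ ℕ)) (Z : ι → Finset (Fin n)),
    (∀ i, k ≤ (Z i).card) ∧ (∀ i, cone (u i) (Z i) ⊆ A) ∧
    (∀ a ∈ A, ∃! i, a ∈ cone (u i) (Z i))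

/-- The multigraded Stanley depth of the `ℤⁿ`-graded module whose monomial basis has
exponent set `A`. -/
def sdepthN {n : ℕ} (A : Set (Fin n →₀ ℕ)) : ℕ∞ :=
  sSup {k : ℕ∞ | ∃ m : ℕ, StanleyPartN A m ∧ k = m}

/-- A multigraded Hilbert decomposition of the monomial ideal `I`, with all retracts
polynomial rings in at least `k` variables: the multigraded Hilbert function of `I`
(which takes values 0 and 1) equals the sum of the multigraded Hilbert functions of
the shifted retracts `x^{u i} K[Z i]`. -/
def HilbertDecompN {K : Type} [Field K] {n : ℕ} (I : Ideal (MvPolynomial (Fin n) K))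
    (k : ℕ) : Prop :=
  ∃ (ι : Type) (_ : Fintype ι) (u : ι → (Fin n →₀ ℕ)) (Z : ι → Finset (Fin n)),
    (∀ i, k ≤ (Z i).card) ∧
    (∀ a : Fin n →₀ ℕ, (a ∈ expSet I ↔ ∃ i, a ∈ cone (u i) (Z i)) ∧
      (∀ i i', a ∈ cone (u i) (Z i) → a ∈ cone (u i') (Z i') → i = i'))

/-- The multigraded Hilbert depth of a monomial ideal `I`. -/
def hdepthN {K : Type} [Field K] {n : ℕ} (I : Ideal (MvPolynomial (Fin n) K)) : ℕ∞ :=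
  sSup {k : ℕ∞ | ∃ m : ℕ, HilbertDecompN I m ∧ k = m}

/-- The graded maximal ideal `(x_1, …, x_n)`. -/
def maxIdeal (K : Type) [Field K] (n : ℕ) : Ideal (MvPolynomial (Fin n) K) :=
  Ideal.span (Set.range X)

/-- The depth of a module `M` over `S = K[x_1,…,x_n]` with respect to the graded maximal
ideal: the supremum of lengths of `M`-regular sequences in `(x_1,…,x_n)`. -/
def mdepth (K : Type) [Field K] (n : ℕ) (M : Type)
    [AddCommGroup M] [Module (MvPolynomial (Fin n) K) M] : ℕ∞ :=
  sSup {k : ℕ∞ | ∃ rs : List (MvPolynomial (Fin n) K),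
    (∀ r ∈ rs, r ∈ maxIdeal K n) ∧ RingTheory.Sequence.IsRegular M rs ∧ k = rs.length}

/-- The quotient module `I/J` for ideals `J ≤ I`. -/
def quotMod {K : Type} [Field K] {n : ℕ} (I J : Ideal (MvPolynomial (Fin n) K)) : Type :=
  ↥I ⧸ (Submodule.comap (Submodule.subtype I) J)

instance {K : Type} [Field K] {n : ℕ} (I J : Ideal (MvPolynomial (Fin n) K)) :
    AddCommGroup (quotMod I J) := by unfold quotMod; infer_instance

instance {K : Type} [Field K] {n : ℕ} (I J : Ideal (MvPolynomial (Fin n) K)) :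
    Module (MvPolynomial (Fin n) K) (quotMod I J) := by unfold quotMod; infer_instance

/-- `ρ_j(I\J)`: the number of squarefree monomials of degree `j` in `I ∖ J`. -/
def rho {K : Type} [Field K] {n : ℕ} (I J : Ideal (MvPolynomial (Fin n) K)) (j : ℕ) : ℕ :=
  Set.ncard {a : Fin n →₀ ℕ | IsSqfree a ∧ edeg a = j ∧ a ∈ expSet I ∧ a ∉ expSet J}

/-- `ρ_j(I)`: the number of squarefree monomials of degree `j` in `I`. -/
def rhoI {K : Type} [Field K] {n : ℕ} (I : Ideal (MvPolynomial (Fin n) K)) (j : ℕ) : ℕ :=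
  Set.ncard {a : Fin n →₀ ℕ | IsSqfree a ∧ edeg a = j ∧ a ∈ expSet I}

/-- `I` is a stable monomial ideal. Here `j` plays the role of `m(u)`, the largest index of
a variable dividing `u = x^a`. -/
def IsStable {K : Type} [Field K] {n : ℕ} (I : Ideal (MvPolynomial (Fin n) K)) : Prop :=
  IsMonomialIdeal I ∧ ∀ a : Fin n →₀ ℕ, (monomial a (1 : K)) ∈ I →
    ∀ j : Fin n, a j ≠ 0 → (∀ l, j < l → a l = 0) → ∀ i, i < j →
      (monomial (a + Finsupp.single i 1 - Finsupp.single j 1) (1 : K)) ∈ I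

/-- `I` is a squarefree stable monomial ideal. -/
def IsSqfreeStable {K : Type} [Field K] {n : ℕ} (I : Ideal (MvPolynomial (Fin n) K)) : Prop :=
  IsSqfreeMonomialIdeal I ∧ ∀ a : Fin n →₀ ℕ, IsSqfree a → (monomial a (1 : K)) ∈ I →
    ∀ j : Fin n, a j ≠ 0 → (∀ l, j < l → a l = 0) → ∀ i, i < j → a i = 0 →
      (monomial (a + Finsupp.single i 1 - Finsupp.single j 1) (1 : K)) ∈ I

/-- `I` is a squarefree strongly stable monomial ideal. -/
def IsSqfreeStronglyStable {K : Type} [Field K] {n : ℕ}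
    (I : Ideal (MvPolynomial (Fin n) K)) : Prop :=
  IsSqfreeMonomialIdeal I ∧ ∀ a : Fin n →₀ ℕ, IsSqfree a → (monomial a (1 : K)) ∈ I →
    ∀ i : Fin n, a i ≠ 0 → ∀ j, j < i → a j = 0 →
      (monomial (a + Finsupp.single j 1 - Finsupp.single i 1) (1 : K)) ∈ I

/-- The exponent vectors of the minimal monomial generators of a monomial ideal:
the monomials of `I` minimal with respect to divisibility. -/
def minGens {K : Type} [Field K] {n : ℕ} (I : Ideal (MvPolynomial (Fin n) K)) :
    Set (Fin n →₀ ℕ) := {a | a ∈ expSet I ∧ ∀ b ∈ expSet I, b ≤ a → b = a}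

/-- `m(u)`: the largest index (1-based) of a variable dividing `x^a`; `0` if `a = 0`. -/
def mvar {n : ℕ} (a : Fin n →₀ ℕ) : ℕ := a.support.sup (fun i => (i : ℕ) + 1)

/-- `m(I) = max { m(u) : u ∈ G(I) }`. -/
def mIdeal {K : Type} [Field K] {n : ℕ} (I : Ideal (MvPolynomial (Fin n) K)) : ℕ :=
  sSup {m | ∃ a ∈ minGens I, m = mvar a}

open MvPolynomial

/-- The `K`-subspace `Aᵢ·xᵢ` of `S`, where `Aᵢ` is the subalgebra generated by `B`. -/
def stSpace {K : Type} [Field K] {n : ℕ} (B : Finset (MvPolynomial (Fin n) K))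
    (x : MvPolynomial (Fin n) K) : Submodule K (MvPolynomial (Fin n) K) :=
  (Subalgebra.toSubmodule (Algebra.adjoin K (B : Set (MvPolynomial (Fin n) K)))).map
    (LinearMap.mulLeft K x)

/-- A standard graded Stanley decomposition of the ideal `I` with all Stanley spaces of
depth at least `k`: a finite family of graded algebra retracts `Sᵢ = K[Bᵢ]` (generated by
`k ≤ |Bᵢ|` linearly independent linear forms) and homogeneous elements `xᵢ ∈ I` with
`Sᵢ ∩ ann(xᵢ) = 0`, such that `I = ⊕ᵢ Sᵢ xᵢ` as graded `K`-vector spaces. -/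
def StanleyDecomp1 {K : Type} [Field K] {n : ℕ} (I : Ideal (MvPolynomial (Fin n) K))
    (k : ℕ) : Prop :=
  ∃ (ι : Type) (_ : Fintype ι) (B : ι → Finset (MvPolynomial (Fin n) K))
    (x : ι → MvPolynomial (Fin n) K) (d : ι → ℕ),
      (∀ i, ∀ b ∈ B i, b ∈ homogeneousSubmodule (Fin n) K 1) ∧
      (∀ i, LinearIndependent K (fun b : (B i : Set (MvPolynomial (Fin n) K)) =>
        (b : MvPolynomial (Fin n) K))) ∧
      (∀ i, k ≤ (B i).card) ∧
      (∀ i, x i ∈ I) ∧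
      (∀ i, x i ∈ homogeneousSubmodule (Fin n) K (d i)) ∧
      (∀ i, ∀ a ∈ Algebra.adjoin K ((B i : Set (MvPolynomial (Fin n) K))),
        a * x i = 0 → a = 0) ∧
      (iSup (fun i => stSpace (B i) (x i)) = Submodule.restrictScalars K I) ∧
      (iSupIndep fun i => stSpace (B i) (x i))

/-- The standard graded Stanley depth of `I`. -/
def sdepth1 {K : Type} [Field K] {n : ℕ} (I : Ideal (MvPolynomial (Fin n) K)) : ℕ∞ :=
  sSup {k : ℕ∞ | ∃ m : ℕ, StanleyDecomp1 I m ∧ k = m}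

/-- The subspace `S₁ · V` of `S`. -/
def mulS1 {K : Type} [Field K] {n : ℕ} (V : Submodule K (MvPolynomial (Fin n) K)) :
    Submodule K (MvPolynomial (Fin n) K) :=
  Submodule.span K {p | ∃ l ∈ homogeneousSubmodule (Fin n) K 1, ∃ v ∈ V, p = l * v}

/-- A lexsegment set of monomials of degree `d`. -/
def IsLexSet {n : ℕ} (d : ℕ) (L : Set (Fin n →₀ ℕ)) : Prop :=
  (∀ a ∈ L, edeg a = d) ∧ ∀ a ∈ L, ∀ b : Fin n →₀ ℕ, edeg b = d → lexGT b a → b ∈ L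

/-- `V ⊆ S_d` is a Gotzmann space: `dim_K (S₁·V) = dim_K (S₁·lex(V))`, where `lex(V)` is
spanned by the lexsegment set of monomials of degree `d` of cardinality `dim_K V`. -/
def IsGotzmannSpace {K : Type} [Field K] {n : ℕ} (d : ℕ)
    (V : Submodule K (MvPolynomial (Fin n) K)) : Prop :=
  ∃ L : Finset (Fin n →₀ ℕ), IsLexSet (n := n) d (L : Set (Fin n →₀ ℕ)) ∧ L.card = Module.finrank K ↥V ∧
    Module.finrank K ↥(mulS1 V) =
      Module.finrank K ↥(mulS1 (Submodule.span K
        ((fun a => (monomial a (1 : K))) '' (L : Set (Fin n →₀ ℕ)))))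

/-- `I` is a homogeneous ideal in the standard grading. -/
def IsHomogeneousIdeal {K : Type} [Field K] {n : ℕ}
    (I : Ideal (MvPolynomial (Fin n) K)) : Prop :=
  ∀ p ∈ I, ∀ k : ℕ, homogeneousComponent k p ∈ I

/-- `I` is a Gotzmann ideal: each homogeneous component `I_k` is a Gotzmann space. -/
def IsGotzmannIdeal {K : Type} [Field K] {n : ℕ}
    (I : Ideal (MvPolynomial (Fin n) K)) : Prop :=
  IsHomogeneousIdeal I ∧ ∀ k : ℕ,
    IsGotzmannSpace k ((Submodule.restrictScalars K I) ⊓ homogeneousSubmodule (Fin n) K k)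

/-- `I` is generated by homogeneous elements of degree `d`. -/
def GenInDegHomog {K : Type} [Field K] {n : ℕ} (I : Ideal (MvPolynomial (Fin n) K))
    (d : ℕ) : Prop :=
  ∃ G : Set (MvPolynomial (Fin n) K), (∀ g ∈ G, g ∈ homogeneousSubmodule (Fin n) K d) ∧
    I = Ideal.span G

namespace MacXi

lemma ch_le_left {m L : ℕ} (h : L ≤ 2*m+1) : L.choose (m+1) ≤ L.choose m := by
  have h1 := Nat.choose_succ_right_eq L m
  have h2 : L.choose m * (L - m) ≤ L.choose m * (m+1) :=
    Nat.mul_le_mul_left _ (by omega)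
  rw [← h1] at h2
  exact Nat.le_of_mul_le_mul_right h2 (by omega)

lemma ch_lt_left {m L : ℕ} (hL : m+1 ≤ L) (h : L ≤ 2*m) : L.choose (m+1) < L.choose m := by
  have h1 := Nat.choose_succ_right_eq L m
  have hp : 0 < L.choose m := Nat.choose_pos (by omega)
  have h2 : L.choose m * (L - m) < L.choose m * (m+1) := by
    calc L.choose m * (L - m) ≤ L.choose m * m := Nat.mul_le_mul_left _ (by omega)
    _ < L.choose m * (m+1) := by nlinarith
  rw [← h1] at h2
  exact Nat.lt_of_mul_lt_mul_right h2

lemma ch_lt_right {m L : ℕ} (h : 2*m+2 ≤ L) : L.choose m < L.choose (m+1) := by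
  have h1 := Nat.choose_succ_right_eq L m
  have hp : 0 < L.choose m := Nat.choose_pos (by omega)
  have h2 : L.choose m * (m+1) < L.choose m * (L - m) := by
    have h3 : L.choose m * (m + 2) ≤ L.choose m * (L - m) := Nat.mul_le_mul_left _ (by omega)
    nlinarith
  rw [← h1] at h2
  exact Nat.lt_of_mul_lt_mul_right h2

lemma ch_le_right {m L : ℕ} (h : 2*m+1 ≤ L) : L.choose m ≤ L.choose (m+1) := by
  rcases eq_or_lt_of_le h with he | hlt
  · rw [← he] at *
    exact le_of_eq (Nat.choose_symm_half m).symm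
  · exact le_of_lt (ch_lt_right (by omega))

lemma gmono {m : ℕ} {a b : ℕ} (ha : 2*m+1 ≤ a) (hab : a ≤ b) :
    (a.choose (m+1) : ℤ) - a.choose m ≤ (b.choose (m+1) : ℤ) - b.choose m := by
  induction b, hab using Nat.le_induction with
  | base => exact le_refl _
  | succ b hb ih =>
    have pas1 : (b+1).choose (m+1) = b.choose m + b.choose (m+1) := Nat.choose_succ_succ' b m
    rcases Nat.eq_zero_or_pos m with rfl | hm
    · simp only [Nat.choose_zero_right] at *
      push_cast [pas1]
      have := Nat.choose_pos (show 0 ≤ b by omega)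
      push_cast at ih ⊢
      linarith
    · obtain ⟨m', rfl⟩ : ∃ m', m = m' + 1 := ⟨m-1, by omega⟩
      have pas2 : (b+1).choose (m'+1) = b.choose m' + b.choose (m'+1) := Nat.choose_succ_succ' b m'
      have hmon : b.choose m' ≤ b.choose (m'+1) := ch_le_right (by omega)
      push_cast [pas1, pas2]
      push_cast at ih
      linarith

lemma pmono {m L : ℕ} (hL : m+1 ≤ L) :
    (L.choose m : ℤ) - L.choose (m+1) ≤ ((2*m).choose m : ℤ) - (2*m).choose (m+1) := by
  rcases le_or_gt L (2*m) with hle | hgt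
  · -- ascending induction from L to 2m
    obtain ⟨d, hd⟩ : ∃ d, L + d = 2*m := ⟨2*m - L, by omega⟩
    induction d generalizing L with
    | zero => simp at hd; rw [hd]
    | succ d ih =>
      have step : (L.choose m : ℤ) - L.choose (m+1) ≤ ((L+1).choose m : ℤ) - (L+1).choose (m+1) := by
        obtain ⟨m', rfl⟩ : ∃ m', m = m' + 1 := ⟨m-1, by omega⟩
        have pas1 : (L+1).choose (m'+1) = L.choose m' + L.choose (m'+1) := Nat.choose_succ_succ' L m'
        have pas2 : (L+1).choose (m'+2) = L.choose (m'+1) + L.choose (m'+2) := Nat.choose_succ_succ' L (m'+1)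
        have hmon : L.choose (m'+1) ≤ L.choose m' := ch_le_left (by omega)
        push_cast [pas1, pas2]
        linarith
      exact step.trans (ih (by omega) (by omega) (by omega))
  · have h1 : L.choose m ≤ L.choose (m+1) := ch_le_right (by omega)
    have h2 : (2*m).choose (m+1) ≤ (2*m).choose m := ch_le_left (by omega)
    have := Int.ofNat_le.2 h1
    push_cast
    push_cast at this
    have := Int.ofNat_le.2 h2
    push_cast at this
    linarith [Int.ofNat_le.2 h1]

def Cat (m : ℕ) : ℤ := ((2*m).choose m : ℤ) - (2*m).choose (m+1)

lemma Cat_pos (m : ℕ) : 1 ≤ Cat m := by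
  rcases Nat.eq_zero_or_pos m with rfl | hm
  · simp [Cat]
  · have := ch_lt_left (m := m) (L := 2*m) (by omega) (by omega)
    unfold Cat
    omega

lemma Cat_id (m : ℕ) : ((m:ℤ)+1) * Cat m = ((2*m).choose m : ℤ) := by
  have h1 := Nat.choose_succ_right_eq (2*m) m
  rw [show 2*m - m = m by omega] at h1
  have h1' : ((2*m).choose (m+1) : ℤ) * (m+1) = ((2*m).choose m : ℤ) * m := by exact_mod_cast h1
  unfold Cat
  ring_nf
  ring_nf at h1'
  linarith

lemma Cat_two {m : ℕ} (hm : 1 ≤ m) : 2 * Cat m ≤ Cat (m+1) := by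
  have A := Cat_id m
  have B := Cat_id (m+1)
  -- C(2m+2, m+1) = 2*(C(2m,m) + C(2m,m-1))
  obtain ⟨m', rfl⟩ : ∃ m', m = m' + 1 := ⟨m-1, by omega⟩
  set m := m' + 1 with hmdef
  have pas : (2*m+2).choose (m+1) = (2*m+1).choose m + (2*m+1).choose (m+1) := Nat.choose_succ_succ' (2*m+1) m
  have symm1 : (2*m+1).choose (m+1) = (2*m+1).choose m := Nat.choose_symm_half m
  have pas2 : (2*m+1).choose (m+1) = (2*m).choose m + (2*m).choose (m+1) := Nat.choose_succ_succ' (2*m) m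
  have symm2 : (2*m).choose (m+1) = (2*m).choose (m-1) := by
    have := Nat.choose_symm (show m+1 ≤ 2*m by omega)
    rw [show 2*m - (m+1) = m - 1 by omega] at this
    omega
  -- (m+1)*C(2m,m-1) = m*C(2m,m)
  have h1 := Nat.choose_succ_right_eq (2*m) m'
  rw [show 2*m - m' = m + 1 by omega, show m' + 1 = m from rfl] at h1
  -- h1 : C(2m,m) * m = C(2m, m') * (m+1)  with m' = m-1
  have eN : (2*m+2).choose (m+1) = 2 * ((2*m).choose m + (2*m).choose m') := by
    have hh : m - 1 = m' := by omega
    rw [hh] at symm2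
    omega
  have key : 2 * ((m:ℤ)+2) * ((2*m).choose m : ℤ) ≤ ((m:ℤ)+1) * ((2*m+2).choose (m+1) : ℤ) := by
    have e1 : ((2*m+2).choose (m+1) : ℤ) = 2 * (((2*m).choose m : ℤ) + ((2*m).choose m' : ℤ)) := by
      exact_mod_cast eN
    have h1' : ((2*m).choose m : ℤ) * m = ((2*m).choose m' : ℤ) * (m+1) := by exact_mod_cast h1
    have hcm : (1:ℤ) ≤ ((2*m).choose m : ℤ) := by
      exact_mod_cast Nat.choose_pos (show m ≤ 2*m by omega)
    have hm1 : (1:ℤ) ≤ (m:ℤ) := by exact_mod_cast hm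
    nlinarith [h1', hcm, hm1]
  have h2m : 2*(m+1) = 2*m+2 := by ring
  rw [h2m] at B
  have B' : ((m:ℤ)+2) * Cat (m+1) = ((2*m+2).choose (m+1) : ℤ) := by
    push_cast at B ⊢
    linarith [B]
  have hpos : (0:ℤ) < ((m:ℤ)+1) := by positivity
  have hq : ((m:ℤ)+1) * (2 * Cat m) ≤ ((m:ℤ)+1) * Cat (m+1) := by
    have hA : ((m:ℤ)+1) * Cat m = ((2*m).choose m : ℤ) := A
    have hpos2 : (0:ℤ) < ((m:ℤ)+2) := by positivity
    have hq2 : ((m:ℤ)+2) * (((m:ℤ)+1) * (2 * Cat m)) ≤ ((m:ℤ)+2) * (((m:ℤ)+1) * Cat (m+1)) := by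
      nlinarith [key, hA, B']
    exact le_of_mul_le_mul_left hq2 hpos2
  exact le_of_mul_le_mul_left hq hpos

lemma Cat_mono (m : ℕ) : Cat m ≤ Cat (m+1) := by
  rcases Nat.eq_zero_or_pos m with rfl | hm
  · simp [Cat]
  · have := Cat_two hm
    have := Cat_pos m
    linarith

lemma Cat_succ_le {m : ℕ} (hm : 1 ≤ m) : Cat m + 1 ≤ Cat (m+1) := by
  have := Cat_two hm
  have := Cat_pos m
  linarith


lemma up_single {m L : ℕ} (hL : m+1 ≤ L) :
    (L.choose (m+1) : ℤ) - L.choose m ≤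
      max (-1) (((L+1).choose (m+1) : ℤ) - ((L+1).choose m : ℤ) - 1) := by
  rcases le_or_gt L (2*m) with hc | hc
  · have h := ch_lt_left hL hc
    refine le_trans ?_ (le_max_left _ _)
    push_cast
    omega
  rcases eq_or_lt_of_le (show 2*m+1 ≤ L by omega) with he | hgt
  · have hsym : L.choose (m+1) = L.choose m := by
      rw [← he]; exact Nat.choose_symm_half m
    have hx : (L+1).choose m < (L+1).choose (m+1) := ch_lt_right (by omega)
    refine le_trans ?_ (le_max_right _ _)
    rw [hsym]
    push_cast
    omega
  · refine le_trans ?_ (le_max_right _ _)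
    have pas1 : (L+1).choose (m+1) = L.choose m + L.choose (m+1) := Nat.choose_succ_succ' L m
    rcases Nat.eq_zero_or_pos m with rfl | hm
    · simp only [Nat.choose_zero_right, pas1]
      push_cast
      omega
    · obtain ⟨m', rfl⟩ : ∃ m', m = m'+1 := ⟨m-1, by omega⟩
      have pas2 : (L+1).choose (m'+1) = L.choose m' + L.choose (m'+1) := Nat.choose_succ_succ' L m'
      have hcc : L.choose m' < L.choose (m'+1) := ch_lt_right (by omega)
      push_cast [pas1, pas2]
      omega

lemma Cat_eval (m : ℕ) : Cat (m+1) = ((2*m+2).choose (m+1) : ℤ) - ((2*m+2).choose m : ℤ) := by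
  unfold Cat
  rw [show 2*(m+1) = 2*m+2 by ring]
  have hs : (2*m+2).choose (m+1+1) = (2*m+2).choose m := by
    have h := Nat.choose_symm (show m+1+1 ≤ 2*m+2 by omega)
    rw [show 2*m+2 - (m+1+1) = m by omega] at h
    exact h.symm
  rw [hs]

lemma comb_single {m L : ℕ} (hL : m+1 ≤ L) :
    (2*(m+1) ≤ L → 1 ≤ (L.choose (m+1) : ℤ) - L.choose m) ∧
    (L < 2*(m+1) → 1 - Cat (m+1) ≤ (L.choose (m+1) : ℤ) - L.choose m) := by
  constructor
  · intro h2
    have hg := gmono (m := m) (a := 2*m+2) (b := L) (by omega) (by omega)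
    have hx := ch_lt_right (m := m) (L := 2*m+2) (by omega)
    omega
  · intro h2
    rcases Nat.eq_zero_or_pos m with rfl | hm
    · have hL1 : L = 1 := by omega
      subst hL1
      norm_num [Cat]
    · have hp : (L.choose m : ℤ) - L.choose (m+1) ≤ Cat m := pmono hL
      have hc1 := Cat_succ_le hm
      linarith

lemma self_le {i k : ℕ} (lam : ℕ → ℕ) (hbot : i ≤ lam i)
    (hinc : ∀ j, i ≤ j → j < k → lam j < lam (j+1)) :
    ∀ j, i ≤ j → j ≤ k → j ≤ lam j := by
  intro j hij
  induction j, hij using Nat.le_induction with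
  | base => intro _; exact hbot
  | succ n hn ih =>
    intro h
    have h2 := hinc n hn (by omega)
    have h3 := ih (by omega)
    omega

lemma up (i : ℕ) (lam : ℕ → ℕ) (h1 : 1 ≤ i) (hbot : i ≤ lam i) :
    ∀ k : ℕ, i ≤ k + 1 → (∀ j, i ≤ j → j < k + 1 → lam j < lam (j+1)) →
    ((∑ j ∈ Finset.Icc i (k+1), (lam j).choose j : ℕ) : ℤ)
      - ((∑ j ∈ Finset.Icc i (k+1), (lam j).choose (j-1) : ℕ) : ℤ)
    ≤ max (-1) (((lam (k+1) + 1).choose (k+1) : ℤ) - ((lam (k+1) + 1).choose k : ℤ) - 1) := by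
  intro k
  induction k with
  | zero =>
    intro hik hinc
    have hi : i = 1 := by omega
    subst hi
    simp only [Finset.Icc_self, Finset.sum_singleton, Nat.zero_add, Nat.sub_self]
    exact up_single (m := 0) (by omega)
  | succ k IH =>
    intro hik hinc
    have hself := self_le lam hbot hinc
    have hL : k + 1 + 1 ≤ lam (k+1+1) := hself (k+1+1) hik (le_refl _)
    rcases eq_or_lt_of_le hik with hi | hi'
    · -- base: i = k+2, single term
      rw [← hi] at hL ⊢
      simp only [Finset.Icc_self, Finset.sum_singleton, Nat.add_sub_cancel] at hL ⊢
      rw [hi] at hL ⊢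
      exact up_single (m := k+1) hL
    · have hik' : i ≤ k + 1 := by omega
      have hinc' : ∀ j, i ≤ j → j < k + 1 → lam j < lam (j+1) := fun j a b => hinc j a (by omega)
      have IH' := IH hik' hinc'
      rw [Finset.sum_Icc_succ_top (show i ≤ k+1+1 by omega),
          Finset.sum_Icc_succ_top (show i ≤ k+1+1 by omega)]
      simp only [Nat.add_sub_cancel]
      have hl' : lam (k+1) < lam (k+1+1) := hinc (k+1) (by omega) (by omega)
      have hself' : k + 1 ≤ lam (k+1) := hself (k+1) (by omega) (by omega)
      rcases le_or_gt (lam (k+1)) (2*k) with hα | hβ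
      · -- inner bound is -1
        have hin : ((lam (k+1)+1).choose (k+1) : ℤ) - ((lam (k+1)+1).choose k : ℤ) - 1 ≤ -1 := by
          have h := ch_le_left (m := k) (L := lam (k+1)+1) (by omega)
          push_cast
          omega
        have hF' := IH'.trans (max_le (le_refl (-1)) hin)
        push_cast at hF'
        rcases le_or_gt (lam (k+1+1)) (2*(k+1)+1) with hs | hs
        · have hg := ch_le_left (m := k+1) (L := lam (k+1+1)) (by omega)
          refine le_trans ?_ (le_max_left _ _)
          push_cast
          omega
        · refine le_trans ?_ (le_max_right _ _)
          have pas1 : (lam (k+1+1)+1).choose (k+1+1)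
              = (lam (k+1+1)).choose (k+1) + (lam (k+1+1)).choose (k+1+1) :=
            Nat.choose_succ_succ' _ (k+1)
          have pas2 : (lam (k+1+1)+1).choose (k+1)
              = (lam (k+1+1)).choose k + (lam (k+1+1)).choose (k+1) :=
            Nat.choose_succ_succ' _ k
          have hcc : (lam (k+1+1)).choose k ≤ (lam (k+1+1)).choose (k+1) :=
            ch_le_right (by omega)
          push_cast [pas1, pas2]
          omega
      · -- lam (k+1) ≥ 2k+1
        have hL2 : 2*(k+1) ≤ lam (k+1+1) := by omega
        rcases eq_or_lt_of_le hL2 with hs | hs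
        · -- lam (k+1+1) = 2k+2, lam (k+1) = 2k+1
          have hlp : lam (k+1) + 1 = 2*(k+1) := by omega
          refine le_trans ?_ (le_max_left _ _)
          rw [hlp] at IH'
          rw [← hs]
          have hsymm : (2*(k+1)).choose (k+1+1) = (2*(k+1)).choose k := by
            have h := Nat.choose_symm (show k+1+1 ≤ 2*(k+1) by omega)
            rw [show 2*(k+1) - (k+1+1) = k by omega] at h
            exact h.symm
          have hg : ((2*(k+1)).choose (k+1+1) : ℤ) - (2*(k+1)).choose (k+1) ≤ 0 := by
            have h := ch_le_left (m := k+1) (L := 2*(k+1)) (by omega)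
            push_cast
            omega
          rcases le_max_iff.mp IH' with hI | hI <;> push_cast at hI ⊢ <;> omega
        · -- lam (k+1+1) ≥ 2k+3
          refine le_trans ?_ (le_max_right _ _)
          have pas1 : (lam (k+1+1)+1).choose (k+1+1)
              = (lam (k+1+1)).choose (k+1) + (lam (k+1+1)).choose (k+1+1) :=
            Nat.choose_succ_succ' _ (k+1)
          have pas2 : (lam (k+1+1)+1).choose (k+1)
              = (lam (k+1+1)).choose k + (lam (k+1+1)).choose (k+1) :=
            Nat.choose_succ_succ' _ k
          have hcc : (lam (k+1+1)).choose k ≤ (lam (k+1+1)).choose (k+1) :=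
            ch_le_right (by omega)
          have hkey := gmono (m := k) (a := lam (k+1) + 1) (b := lam (k+1+1)) (by omega) (by omega)
          rcases le_max_iff.mp IH' with hI | hI <;> push_cast at hI ⊢ <;> push_cast [pas1, pas2] <;> omega

lemma comb (i : ℕ) (lam : ℕ → ℕ) (h1 : 1 ≤ i) (hbot : i ≤ lam i) :
    ∀ k : ℕ, i ≤ k + 1 → (∀ j, i ≤ j → j < k + 1 → lam j < lam (j+1)) →
    (2*(k+1) ≤ lam (k+1) → 1 ≤ ((∑ j ∈ Finset.Icc i (k+1), (lam j).choose j : ℕ) : ℤ)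
      - ((∑ j ∈ Finset.Icc i (k+1), (lam j).choose (j-1) : ℕ) : ℤ)) ∧
    (lam (k+1) < 2*(k+1) → 1 - Cat (k+1) ≤ ((∑ j ∈ Finset.Icc i (k+1), (lam j).choose j : ℕ) : ℤ)
      - ((∑ j ∈ Finset.Icc i (k+1), (lam j).choose (j-1) : ℕ) : ℤ)) := by
  intro k
  induction k with
  | zero =>
    intro hik hinc
    have hi : i = 1 := by omega
    subst hi
    simp only [Finset.Icc_self, Finset.sum_singleton, Nat.zero_add, Nat.sub_self]
    exact comb_single (m := 0) (by omega)
  | succ k IH =>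
    intro hik hinc
    have hself := self_le lam hbot hinc
    have hL : k + 1 + 1 ≤ lam (k+1+1) := hself (k+1+1) hik (le_refl _)
    rcases eq_or_lt_of_le hik with hi | hi'
    · rw [← hi] at hL ⊢
      simp only [Finset.Icc_self, Finset.sum_singleton, Nat.add_sub_cancel] at hL ⊢
      rw [hi] at hL ⊢
      exact comb_single (m := k+1) hL
    · have hik' : i ≤ k + 1 := by omega
      have hinc' : ∀ j, i ≤ j → j < k + 1 → lam j < lam (j+1) := fun j a b => hinc j a (by omega)
      have IH' := IH hik' hinc'
      have hself' : k + 1 ≤ lam (k+1) := hself (k+1) (by omega) (by omega)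
      have hF' : 1 - Cat (k+1) ≤ ((∑ j ∈ Finset.Icc i (k+1), (lam j).choose j : ℕ) : ℤ)
          - ((∑ j ∈ Finset.Icc i (k+1), (lam j).choose (j-1) : ℕ) : ℤ) := by
        rcases le_or_gt (2*(k+1)) (lam (k+1)) with hc | hc
        · have := IH'.1 hc
          have := Cat_pos (k+1)
          linarith
        · exact IH'.2 hc
      push_cast at hF'
      rw [Finset.sum_Icc_succ_top (show i ≤ k+1+1 by omega),
          Finset.sum_Icc_succ_top (show i ≤ k+1+1 by omega)]
      simp only [Nat.add_sub_cancel]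
      constructor
      · intro h2
        have hg := gmono (m := k+1) (a := 2*(k+1)+2) (b := lam (k+1+1)) (by omega) (by omega)
        have hce : Cat (k+1+1) = ((2*(k+1)+2).choose (k+1+1) : ℤ) - ((2*(k+1)+2).choose (k+1) : ℤ) :=
          Cat_eval (k+1)
        have hmono := Cat_mono (k+1)
        push_cast
        omega
      · intro h2
        have hp : ((lam (k+1+1)).choose (k+1) : ℤ) - (lam (k+1+1)).choose (k+1+1) ≤ Cat (k+1) :=
          pmono hL
        have htwo := Cat_two (show 1 ≤ k+1 by omega)
        push_cast
        omega

lemma sumb (i : ℕ) (lam : ℕ → ℕ) (h1 : 1 ≤ i) (hbot : i ≤ lam i) :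
    ∀ k : ℕ, i ≤ k + 1 → (∀ j, i ≤ j → j < k + 1 → lam j < lam (j+1)) →
    (∑ j ∈ Finset.Icc i (k+1), (lam j).choose j) + 1 ≤ (lam (k+1) + 1).choose (k+1) := by
  intro k
  induction k with
  | zero =>
    intro hik hinc
    have hi : i = 1 := by omega
    subst hi
    simp only [Finset.Icc_self, Finset.sum_singleton, Nat.zero_add]
    rw [Nat.choose_one_right, Nat.choose_one_right]
  | succ k IH =>
    intro hik hinc
    have hself := self_le lam hbot hinc
    have hL : k + 1 + 1 ≤ lam (k+1+1) := hself (k+1+1) hik (le_refl _)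
    have pas : (lam (k+1+1)+1).choose (k+1+1)
        = (lam (k+1+1)).choose (k+1) + (lam (k+1+1)).choose (k+1+1) :=
      Nat.choose_succ_succ' _ (k+1)
    rcases eq_or_lt_of_le hik with hi | hi'
    · rw [← hi] at hL ⊢
      simp only [Finset.Icc_self, Finset.sum_singleton] at hL ⊢
      rw [hi] at hL ⊢
      have hpos : 0 < (lam (k+1+1)).choose (k+1) := Nat.choose_pos (by omega)
      omega
    · have hik' : i ≤ k + 1 := by omega
      have hinc' : ∀ j, i ≤ j → j < k + 1 → lam j < lam (j+1) := fun j a b => hinc j a (by omega)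
      have IH' := IH hik' hinc'
      have hl' : lam (k+1) < lam (k+1+1) := hinc (k+1) (by omega) (by omega)
      have hmono : (lam (k+1) + 1).choose (k+1) ≤ (lam (k+1+1)).choose (k+1) :=
        Nat.choose_le_choose _ (by omega)
      rw [Finset.sum_Icc_succ_top (show i ≤ k+1+1 by omega)]
      omega

lemma xi_succ (k : ℕ) : xi (k+1) = xi k + (2*k+1).choose (k+1) := by
  unfold xi
  rw [Finset.sum_Icc_succ_top (show 1 ≤ k+1 by omega),
      show 2*(k+1) - 1 = 2*k+1 by omega]

lemma xib : ∀ k : ℕ, xi k < (2*k).choose k := by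
  intro k
  induction k with
  | zero => simp [xi]
  | succ k IH =>
    rw [xi_succ, show 2*(k+1) = 2*k+1+1 by ring, Nat.choose_succ_succ' (2*k+1) k]
    have h1 : (2*k).choose k ≤ (2*k+1).choose k := Nat.choose_le_choose _ (by omega)
    omega

lemma xi_ge (k : ℕ) : (2*k+1).choose (k+1) ≤ xi (k+1) := by
  rw [xi_succ]
  omega

lemma main_single {m L : ℕ} (hL : m+1 ≤ L) :
    (L.choose (m+1) ≤ xi (m+1) ↔ L.choose (m+1) ≤ L.choose m) := by
  rcases le_or_gt L (2*m) with hc | hc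
  · have h2 : L.choose (m+1) ≤ L.choose m := (ch_lt_left hL hc).le
    have h3 : L.choose (m+1) ≤ (2*m+1).choose (m+1) := Nat.choose_le_choose _ (by omega)
    exact iff_of_true (h3.trans (xi_ge m)) h2
  rcases eq_or_lt_of_le (show 2*m+1 ≤ L by omega) with he | hgt
  · have hsym : L.choose (m+1) = L.choose m := by
      rw [← he]; exact Nat.choose_symm_half m
    exact iff_of_true (by rw [← he]; exact xi_ge m) hsym.le
  · have h2 : L.choose m < L.choose (m+1) := ch_lt_right (by omega)
    have h3 : xi (m+1) < L.choose (m+1) := by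
      have h4 := xib (m+1)
      have h5 : (2*(m+1)).choose (m+1) ≤ L.choose (m+1) := Nat.choose_le_choose _ (by omega)
      omega
    exact iff_of_false (by omega) (by omega)

lemma main (i : ℕ) (lam : ℕ → ℕ) (h1 : 1 ≤ i) (hbot : i ≤ lam i) :
    ∀ k : ℕ, i ≤ k + 1 → (∀ j, i ≤ j → j < k + 1 → lam j < lam (j+1)) →
    ((∑ j ∈ Finset.Icc i (k+1), (lam j).choose j) ≤ xi (k+1) ↔
     (∑ j ∈ Finset.Icc i (k+1), (lam j).choose j) ≤ ∑ j ∈ Finset.Icc i (k+1), (lam j).choose (j-1)) := by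
  intro k
  induction k with
  | zero =>
    intro hik hinc
    have hi : i = 1 := by omega
    subst hi
    simp only [Finset.Icc_self, Finset.sum_singleton, Nat.zero_add, Nat.sub_self]
    exact main_single (m := 0) (by omega)
  | succ k IH =>
    intro hik hinc
    have hself := self_le lam hbot hinc
    have hL : k + 1 + 1 ≤ lam (k+1+1) := hself (k+1+1) hik (le_refl _)
    rcases eq_or_lt_of_le hik with hi | hi'
    · rw [← hi] at hL ⊢
      simp only [Finset.Icc_self, Finset.sum_singleton, Nat.add_sub_cancel] at hL ⊢
      rw [hi] at hL ⊢
      exact main_single (m := k+1) hL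
    · have hik' : i ≤ k + 1 := by omega
      have hinc' : ∀ j, i ≤ j → j < k + 1 → lam j < lam (j+1) := fun j a b => hinc j a (by omega)
      have IH' := IH hik' hinc'
      rcases lt_trichotomy (lam (k+1+1)) (2*(k+1)+1) with hc | hc | hc
      · -- lam top ≤ 2k+2 : both true
        have hleft : (∑ j ∈ Finset.Icc i (k+1+1), (lam j).choose j) ≤ xi (k+1+1) := by
          have hs := sumb i lam h1 hbot (k+1) hik hinc
          have hm : (lam (k+1+1) + 1).choose (k+1+1) ≤ (2*(k+1)+1).choose (k+1+1) :=
            Nat.choose_le_choose _ (by omega)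
          have hx := xi_ge (k+1)
          omega
        have hright : ((∑ j ∈ Finset.Icc i (k+1+1), (lam j).choose j : ℕ) : ℤ)
            - ((∑ j ∈ Finset.Icc i (k+1+1), (lam j).choose (j-1) : ℕ) : ℤ) ≤ -1 := by
          have hu := up i lam h1 hbot (k+1) hik hinc
          have hin : ((lam (k+1+1)+1).choose (k+1+1) : ℤ) - ((lam (k+1+1)+1).choose (k+1) : ℤ) - 1 ≤ -1 := by
            have h := ch_le_left (m := k+1) (L := lam (k+1+1)+1) (by omega)
            push_cast
            omega
          exact hu.trans (max_le (le_refl _) hin)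
        refine iff_of_true hleft ?_
        omega
      · -- lam top = 2k+3 : recurse
        rw [Finset.sum_Icc_succ_top (show i ≤ k+1+1 by omega),
            Finset.sum_Icc_succ_top (show i ≤ k+1+1 by omega), xi_succ (k+1)]
        simp only [Nat.add_sub_cancel]
        rw [hc, Nat.choose_symm_half (k+1)]
        rw [add_le_add_iff_right, add_le_add_iff_right]
        exact IH'
      · -- lam top ≥ 2k+4 : both false
        have hleft : xi (k+1+1) < ∑ j ∈ Finset.Icc i (k+1+1), (lam j).choose j := by
          have hx := xib (k+1+1)
          have hm : (2*(k+1+1)).choose (k+1+1) ≤ (lam (k+1+1)).choose (k+1+1) :=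
            Nat.choose_le_choose _ (by omega)
          have hs : (lam (k+1+1)).choose (k+1+1) ≤ ∑ j ∈ Finset.Icc i (k+1+1), (lam j).choose j := by
            apply Finset.single_le_sum (f := fun j => (lam j).choose j)
            · intro j _; exact Nat.zero_le _
            · simp only [Finset.mem_Icc]; omega
          omega
        have hright := (comb i lam h1 hbot (k+1) hik hinc).1 (by omega)
        refine iff_of_false (by omega) ?_
        omega

end MacXi

/-- Proposition `inv1`. For positive integers `x` and `k`, given the
`k`-th Macaulay representation `x = C(λ_k,k) + C(λ_{k-1},k-1) + ⋯ + C(λ_i,i)` with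
`λ_k > λ_{k-1} > ⋯ > λ_i ≥ i ≥ 1`, the following are equivalent:
(a) `x ≤ ξ_k`; (b) `∂_{k-1}(x) = ∑_j C(λ_j, j-1) ≥ x`; (c) `x^{MG(k)} = ∑_j C(λ_j+1, j) ≥ 2x`. -/
theorem macaulay_xi_equiv (x k : ℕ) (hx : 0 < x) (hk : 0 < k) (i : ℕ) (lam : ℕ → ℕ)
    (hi1 : 1 ≤ i) (hik : i ≤ k)
    (hinc : ∀ j, i ≤ j → j < k → lam j < lam (j + 1)) (hbot : i ≤ lam i)
    (hrep : x = ∑ j ∈ Finset.Icc i k, (lam j).choose j) :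
    (x ≤ xi k ↔ x ≤ ∑ j ∈ Finset.Icc i k, (lam j).choose (j - 1)) ∧
    (x ≤ xi k ↔ 2 * x ≤ ∑ j ∈ Finset.Icc i k, (lam j + 1).choose j) := by
  subst hrep
  obtain ⟨k', rfl⟩ : ∃ k', k = k' + 1 := ⟨k-1, by omega⟩
  have h1 := MacXi.main i lam hi1 hbot k' hik hinc
  refine ⟨h1, ?_⟩
  have hMG : ∑ j ∈ Finset.Icc i (k'+1), (lam j + 1).choose j
      = (∑ j ∈ Finset.Icc i (k'+1), (lam j).choose j)
        + ∑ j ∈ Finset.Icc i (k'+1), (lam j).choose (j-1) := by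
    rw [← Finset.sum_add_distrib]
    apply Finset.sum_congr rfl
    intro j hj
    have hj1 : 1 ≤ j := le_trans hi1 (Finset.mem_Icc.mp hj).1
    obtain ⟨j', rfl⟩ : ∃ j', j = j'+1 := ⟨j-1, by omega⟩
    rw [Nat.choose_succ_succ' (lam (j'+1)) j', Nat.add_sub_cancel]
    exact Nat.add_comm _ _
  rw [hMG]
  constructor
  · intro h
    have h2 := h1.mp h
    omega
  · intro h
    apply h1.mpr
    omega
end
end

section
/- Let I be a monomial ideal of S = K[x_1,…,x_n] generated by monomials of degrees ≥ d. If hdepth_1(I) ≥ k for a natural number k, then H(I, d+1) ≥ k · H(I, d), where H(I, j) denotes the Hilbert function of I in degree j. -/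
noncomputable section

open MvPolynomial

open MvPolynomial

section AuxProof

open MvPolynomial

lemma edeg_eq_degree {n : ℕ} (a : Fin n →₀ ℕ) : edeg a = Finsupp.degree a :=
  (Finset.sum_subset (Finset.subset_univ _)
    (fun _ _ hi => Finsupp.notMem_support_iff.mp hi)).symm

lemma coeff_mem_span_monomial {K : Type} [Field K] {n : ℕ} {G : Set (Fin n →₀ ℕ)}
    {p : MvPolynomial (Fin n) K}
    (hp : p ∈ Ideal.span ((fun a => (monomial a (1 : K))) '' G)) :
    ∀ b, MvPolynomial.coeff b p ≠ 0 → ∃ a ∈ G, a ≤ b := by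
  refine Submodule.span_induction ?_ ?_ ?_ ?_ hp
  · rintro x ⟨a, ha, rfl⟩ b hb
    rw [coeff_monomial] at hb
    by_cases h : a = b
    · exact ⟨a, ha, h ▸ le_rfl⟩
    · simp [h] at hb
  · intro b hb; simp at hb
  · intro x y hx hy ihx ihy b hb
    rw [coeff_add] at hb
    by_cases h : coeff b x = 0
    · exact ihy b (by simpa [h] using hb)
    · exact ihx b h
  · intro c x hx ih b hb
    rw [smul_eq_mul, coeff_mul] at hb
    obtain ⟨q, hq, hne⟩ := Finset.exists_ne_zero_of_sum_ne_zero hb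
    obtain ⟨a, ha, hab⟩ := ih q.2 (fun h => hne (by simp [h]))
    refine ⟨a, ha, hab.trans ?_⟩
    rw [Finset.HasAntidiagonal.mem_antidiagonal] at hq
    exact hq ▸ le_add_self

lemma hilb_eq_zero_of_lt_gen {K : Type} [Field K] {n d : ℕ}
    {I : Ideal (MvPolynomial (Fin n) K)} (hgen : GenBy I (fun a => d ≤ edeg a))
    {j : ℕ} (hj : j < d) : hilb I j = 0 := by
  obtain ⟨G, hG, rfl⟩ := hgen
  have hbot : (Submodule.restrictScalars K (Ideal.span ((fun a => (monomial a (1:K))) '' G)))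
      ⊓ homogeneousSubmodule (Fin n) K j = ⊥ := by
    rw [eq_bot_iff]
    intro p hp
    rw [Submodule.mem_inf] at hp
    obtain ⟨hpI, hpj⟩ := hp
    simp only [Submodule.mem_bot]
    by_contra hp0
    obtain ⟨b, hb⟩ := MvPolynomial.ne_zero_iff.mp hp0
    obtain ⟨a, haG, hab⟩ := coeff_mem_span_monomial hpI b hb
    have hhom : p.IsHomogeneous j := (mem_homogeneousSubmodule _ _).mp hpj 
    have hdeg : Finsupp.degree b = j := by
      have := hhom hb
      rw [Finsupp.degree_eq_weight_one]; exact this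
    have h1 : edeg a ≤ edeg b := Finset.sum_le_sum fun i _ => hab i
    have h2 := hG a haG
    rw [edeg_eq_degree a, edeg_eq_degree b, hdeg] at h1
    rw [edeg_eq_degree] at h2
    omega
  unfold hilb
  rw [hbot, finrank_bot]

lemma polyHilb_neg (D : ℕ) {t : ℤ} (ht : t < 0) : polyHilb D t = 0 := by
  simp [polyHilb, ht]

lemma polyHilb_zero {D : ℕ} (hD : 1 ≤ D) : polyHilb D 0 = 1 := by
  have : D ≠ 0 := by omega
  simp [polyHilb, this]

lemma polyHilb_one {D : ℕ} (hD : 1 ≤ D) : polyHilb D 1 = D := by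
  have hD0 : D ≠ 0 := by omega
  have h1 : (1:ℤ).toNat + (D - 1) = D := by omega
  have h2 : D - (D - 1) = 1 := by omega
  simp only [polyHilb, hD0, if_false]
  rw [if_neg (by norm_num), h1, ← Nat.choose_symm (Nat.sub_le D 1), h2,
    Nat.choose_one_right]

lemma polyHilb_pos {D : ℕ} (hD : 1 ≤ D) {t : ℤ} (ht : 0 ≤ t) : 0 < polyHilb D t := by
  have hD0 : D ≠ 0 := by omega
  simp only [polyHilb, hD0, if_false, if_neg (not_lt.mpr ht)]
  exact Nat.choose_pos (Nat.le_add_left _ _)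

end AuxProof

/-- Lemma `hdepth_nec`. Let `I` be a monomial ideal of `S` generated by
monomials of degrees `≥ d`. If `hdepth_1(I) ≥ k`, then `H(I, d+1) ≥ k ⬝ H(I, d)`. -/
theorem hilb_ge_of_hdepth1_ge {K : Type} [Field K] {n d : ℕ}
    (I : Ideal (MvPolynomial (Fin n) K)) (hgen : GenBy I (fun a => d ≤ edeg a))
    (k : ℕ) (hk : (k : ℕ∞) ≤ hdepth1 I) :
    k * hilb I d ≤ hilb I (d + 1) := by
  rcases Nat.eq_zero_or_pos k with rfl | hkpos
  · simp
  obtain ⟨m, hdec, hkm⟩ : ∃ m, HilbertDecomp1 I m ∧ k ≤ m := by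
    by_contra hcon
    push_neg at hcon
    have hle : hdepth1 I ≤ ((k - 1 : ℕ) : ℕ∞) := by
      apply sSup_le
      rintro x ⟨m, hm, rfl⟩
      exact_mod_cast Nat.le_sub_one_of_lt (hcon m hm)
    have h1 : (k : ℕ∞) ≤ ((k - 1 : ℕ) : ℕ∞) := le_trans hk hle
    have h2 : k ≤ k - 1 := by exact_mod_cast h1
    omega
  obtain ⟨ι, _, dd, s, hdd, hH⟩ := hdec
  have hddk : ∀ i, k ≤ dd i := fun i => le_trans hkm (hdd i)
  have hdd1 : ∀ i, 1 ≤ dd i := fun i => le_trans hkpos (hddk i)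
  have hzero : ∀ j : ℤ, j < (d : ℤ) → hilbZ I j = 0 := by
    intro j hj
    unfold hilbZ
    split
    · exact hilb_eq_zero_of_lt_gen hgen (by omega)
    · rfl
  have hs : ∀ i, (d : ℤ) ≤ s i := by
    intro i
    by_contra hsi
    push_neg at hsi
    have h0 := hH (s i)
    rw [hzero (s i) hsi] at h0
    have h1 := (Finset.sum_eq_zero_iff.mp h0.symm) i (Finset.mem_univ i)
    rw [sub_self, polyHilb_zero (hdd1 i)] at h1
    exact one_ne_zero h1
  have hd : hilb I d = ∑ i, polyHilb (dd i) ((d : ℤ) - s i) := by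
    have := hH (d : ℤ)
    unfold hilbZ at this
    rw [if_pos (by positivity), Int.toNat_natCast] at this
    exact this
  have hd1 : hilb I (d + 1) = ∑ i, polyHilb (dd i) (((d : ℤ) + 1) - s i) := by
    have := hH ((d : ℤ) + 1)
    unfold hilbZ at this
    rw [if_pos (by positivity)] at this
    have ht : ((d : ℤ) + 1).toNat = d + 1 := by omega
    rw [ht] at this
    exact this
  have hterm : ∀ i, polyHilb (dd i) ((d : ℤ) - s i) = if s i = (d : ℤ) then 1 else 0 := by
    intro i
    by_cases h : s i = (d : ℤ)
    · rw [if_pos h, h, sub_self, polyHilb_zero (hdd1 i)]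
    · rw [if_neg h, polyHilb_neg]
      have := hs i
      omega
  have hbound : ∀ i, k * (if s i = (d : ℤ) then 1 else 0)
      ≤ polyHilb (dd i) (((d : ℤ) + 1) - s i) := by
    intro i
    by_cases h : s i = (d : ℤ)
    · rw [if_pos h, h, mul_one]
      have : (d : ℤ) + 1 - (d : ℤ) = 1 := by ring
      rw [this, polyHilb_one (hdd1 i)]
      exact hddk i
    · rw [if_neg h, mul_zero]
      exact Nat.zero_le _
  calc k * hilb I d = ∑ i, k * (if s i = (d : ℤ) then 1 else 0) := by
        rw [hd, Finset.mul_sum]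
        exact Finset.sum_congr rfl fun i _ => by rw [hterm i]
    _ ≤ ∑ i, polyHilb (dd i) (((d : ℤ) + 1) - s i) :=
        Finset.sum_le_sum fun i _ => hbound i
    _ = hilb I (d + 1) := hd1.symm
end
end
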